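/- The function y ↦ E[G(y)], where G(y) is a truncated geometric random variable on {0,1,...,C} with parameter y > 0 (P(G(y)=k) = y^k / Σ_{j=0}^C y^j), is strictly increasing in y on (0,∞). -/

import Mathlib

open Finset

private lemma tg_pointwise (a b : ℝ) (ha : 0 < a) (hab : a < b) (i j : ℕ) (hji : j ≤ i) :
    (i : ℝ) * a ^ i * b ^ j + (j : ℝ) * a ^ j * b ^ i ≤
    (i : ℝ) * b ^ i * a ^ j + (j : ℝ) * b ^ j * a ^ i := by
  have hb : 0 < b := ha.trans hab
  have hpow : a ^ i * b ^ j ≤ b ^ i * a ^ j := by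
    calc a ^ i * b ^ j = (a ^ (i - j) * a ^ j) * b ^ j := by
          rw [← pow_add, Nat.sub_add_cancel hji]
      _ ≤ (b ^ (i - j) * a ^ j) * b ^ j := by
          gcongr
      _ = b ^ i * a ^ j := by rw [mul_right_comm, ← pow_add, Nat.sub_add_cancel hji]
  have hij : (j : ℝ) ≤ (i : ℝ) := by exact_mod_cast hji
  nlinarith [mul_nonneg (sub_nonneg.2 hij) (sub_nonneg.2 hpow)]

private lemma tg_key (C : ℕ) (hC : 1 ≤ C) (a b : ℝ) (ha : 0 < a) (hab : a < b) :
    (∑ k ∈ range (C + 1), (k : ℝ) * a ^ k) * (∑ k ∈ range (C + 1), b ^ k) <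
    (∑ k ∈ range (C + 1), (k : ℝ) * b ^ k) * (∑ k ∈ range (C + 1), a ^ k) := by
  have hb : 0 < b := ha.trans hab
  set s := range (C + 1) with hs
  have hswap : ∀ f : ℕ → ℕ → ℝ,
      (∑ p ∈ s ×ˢ s, f p.1 p.2) = ∑ p ∈ s ×ˢ s, f p.2 p.1 := by
    intro f
    rw [Finset.sum_product, Finset.sum_product]
    exact Finset.sum_comm
  have hX : (∑ k ∈ s, (k : ℝ) * a ^ k) * (∑ k ∈ s, b ^ k)
      = ∑ p ∈ s ×ˢ s, (p.1 : ℝ) * a ^ p.1 * b ^ p.2 := by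
    rw [Finset.sum_mul_sum, Finset.sum_product]
  have hY : (∑ k ∈ s, (k : ℝ) * b ^ k) * (∑ k ∈ s, a ^ k)
      = ∑ p ∈ s ×ˢ s, (p.1 : ℝ) * b ^ p.1 * a ^ p.2 := by
    rw [Finset.sum_mul_sum, Finset.sum_product]
  rw [hX, hY]
  have hdouble :
      (∑ p ∈ s ×ˢ s, ((p.1 : ℝ) * a ^ p.1 * b ^ p.2 + (p.2 : ℝ) * a ^ p.2 * b ^ p.1)) <
      (∑ p ∈ s ×ˢ s, ((p.1 : ℝ) * b ^ p.1 * a ^ p.2 + (p.2 : ℝ) * b ^ p.2 * a ^ p.1)) := by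
    apply Finset.sum_lt_sum
    · intro p hp
      rcases le_total p.2 p.1 with h | h
      · exact tg_pointwise a b ha hab p.1 p.2 h
      · have := tg_pointwise a b ha hab p.2 p.1 h
        linarith
    · refine ⟨(1, 0), ?_, ?_⟩
      · simp [hs, Finset.mem_product]
        omega
      · simp
        linarith
  have e1 : (∑ p ∈ s ×ˢ s, ((p.1 : ℝ) * a ^ p.1 * b ^ p.2 + (p.2 : ℝ) * a ^ p.2 * b ^ p.1))
      = 2 * ∑ p ∈ s ×ˢ s, (p.1 : ℝ) * a ^ p.1 * b ^ p.2 := by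
    rw [Finset.sum_add_distrib,
      hswap (fun i j => (j : ℝ) * a ^ j * b ^ i)]
    ring
  have e2 : (∑ p ∈ s ×ˢ s, ((p.1 : ℝ) * b ^ p.1 * a ^ p.2 + (p.2 : ℝ) * b ^ p.2 * a ^ p.1))
      = 2 * ∑ p ∈ s ×ˢ s, (p.1 : ℝ) * b ^ p.1 * a ^ p.2 := by
    rw [Finset.sum_add_distrib,
      hswap (fun i j => (j : ℝ) * b ^ j * a ^ i)]
    ring
  rw [e1, e2] at hdouble
  linarith

/-- The expectation of a truncated geometric random variable on {0,...,C}
with parameter y (probabilities y^k / Σ_j y^j) is strictly increasing in y on (0,∞). -/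
theorem trunc_geom_mean_strictMono (C : ℕ) (hC : 1 ≤ C) :
    StrictMonoOn (fun y : ℝ =>
      (∑ k ∈ Finset.range (C + 1), (k : ℝ) * y ^ k) /
      (∑ k ∈ Finset.range (C + 1), y ^ k)) (Set.Ioi (0 : ℝ)) := by
  intro a ha b hb hab
  simp only [Set.mem_Ioi] at ha hb
  have hSa : 0 < ∑ k ∈ range (C + 1), a ^ k :=
    Finset.sum_pos (fun k _ => pow_pos ha k) nonempty_range_add_one
  have hSb : 0 < ∑ k ∈ range (C + 1), b ^ k :=
    Finset.sum_pos (fun k _ => pow_pos hb k) nonempty_range_add_one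
  simp only
  rw [div_lt_div_iff₀ hSa hSb]
  exact tg_key C hC a b ha hab
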